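/- There exists a 3×3 doubly stochastic matrix (for suitable strict preferences of three agents) that satisfies weak SD-envy-freeness but admits no decomposition into permutation matrices in which every agent envies every other agent with probability at most 1/2. Concretely, with preferences a≻_1 b≻_1 c, a≻_2 c≻_2 b, c≻_3 a≻_3 b, the matrix with rows (0,1,0), (0.9,0,0.1), (0.1,0,0.9) works. -/

import Mathlib

/-- A doubly stochastic assignment matrix: nonnegative entries, each row and column sums to 1. -/
def DoublyStochastic (n : ℕ) (P : Fin n → Fin n → ℝ) : Prop :=
  (∀ i o, 0 ≤ P i o) ∧ (∀ i, ∑ o, P i o = 1) ∧ (∀ o, ∑ i, P i o = 1)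

/-- SD-envy-freeness: `rank i o` is the position of object `o` in agent `i`'s strict
preference (smaller = more preferred). For all agents `i, i'` and objects `o`, the mass agent
`i` gets on objects weakly preferred (by `i`) to `o` is at least the mass `i'` gets there. -/
def SDEF (n : ℕ) (rank : Fin n → Equiv.Perm (Fin n)) (P : Fin n → Fin n → ℝ) : Prop :=
  ∀ i i' o : Fin n,
    ∑ o' ∈ Finset.univ.filter (fun o' => rank i o' ≤ rank i o), P i' o' ≤
    ∑ o' ∈ Finset.univ.filter (fun o' => rank i o' ≤ rank i o), P i o'

/-- A decomposition of an assignment matrix: a probability distribution over deterministic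
assignments (permutations `σ`, where `σ i` is the object of agent `i`) whose marginals are `P`. -/
def IsDecomposition (n : ℕ) (P : Fin n → Fin n → ℝ) (w : Equiv.Perm (Fin n) → ℝ) : Prop :=
  (∀ σ, 0 ≤ w σ) ∧ (∑ σ, w σ = 1) ∧
  ∀ i o, ∑ σ ∈ Finset.univ.filter (fun σ : Equiv.Perm (Fin n) => σ i = o), w σ = P i o

/-- The probability, under the distribution `w` over deterministic assignments, that agent `i`
envies agent `i'` (i.e. strictly prefers `i'`'s object to her own). -/
def envyProb (n : ℕ) (rank : Fin n → Equiv.Perm (Fin n)) (w : Equiv.Perm (Fin n) → ℝ)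
    (i i' : Fin n) : ℝ :=
  ∑ σ ∈ Finset.univ.filter (fun σ : Equiv.Perm (Fin n) => rank i (σ i') < rank i (σ i)), w σ

/-- `SDdom n e X Y`: random allocation X stochastically dominates Y with respect to the
preference with rank function `e` (smaller rank = more preferred). -/
def SDdom (n : ℕ) (e : Equiv.Perm (Fin n)) (X Y : Fin n → ℝ) : Prop :=
  ∀ o : Fin n, ∑ o' ∈ Finset.univ.filter (fun o' => e o' ≤ e o), Y o' ≤
    ∑ o' ∈ Finset.univ.filter (fun o' => e o' ≤ e o), X o'

/-- Weak SD-envy-freeness: for each pair of agents, either their rows coincide or the other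
agent's row does not stochastically dominate one's own row w.r.t. one's own preference. -/
def WeakSDEF (n : ℕ) (rank : Fin n → Equiv.Perm (Fin n)) (P : Fin n → Fin n → ℝ) : Prop :=
  ∀ i i' : Fin n, (∀ o, P i o = P i' o) ∨ ¬ SDdom n (rank i) (P i') (P i)

/-- Example 2: with preferences a≻₁b≻₁c, a≻₂c≻₂b, c≻₃a≻₃b, the doubly
stochastic matrix with rows (0,1,0), (0.9,0,0.1), (0.1,0,0.9) satisfies weak SD-EF but
admits no decomposition in which every agent envies every other agent with probability at
most 1/2 (no Dec-EF decomposition). Hence there exists a weak SD-EF doubly stochastic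
matrix that is not EF-decomposable. -/
theorem weak_sdef_not_ef_decomposable :
    let rank : Fin 3 → Equiv.Perm (Fin 3) :=
      ![Equiv.refl (Fin 3), Equiv.swap 1 2, (Equiv.swap 0 1).trans (Equiv.swap 0 2)]
    let P : Fin 3 → Fin 3 → ℝ := ![![0, 1, 0], ![0.9, 0, 0.1], ![0.1, 0, 0.9]]
    DoublyStochastic 3 P ∧ WeakSDEF 3 rank P ∧
      ¬ ∃ w : Equiv.Perm (Fin 3) → ℝ, IsDecomposition 3 P w ∧
        ∀ i i' : Fin 3, i ≠ i' → envyProb 3 rank w i i' ≤ 1 / 2 := by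
  intro rank P
  have hsub : ∀ (w : Equiv.Perm (Fin 3) → ℝ), (∀ σ, 0 ≤ w σ) →
      ∑ σ ∈ Finset.univ.filter (fun σ : Equiv.Perm (Fin 3) => σ 1 = 0), w σ ≤
        envyProb 3 rank w 0 1 := by
    intro w hnn
    apply Finset.sum_le_sum_of_subset_of_nonneg
    · intro σ hσ
      simp only [Finset.mem_filter, Finset.mem_univ, true_and] at hσ ⊢
      have hne : σ 0 ≠ σ 1 := fun h => by simpa using σ.injective h
      rw [hσ] at hne
      simp only [rank, Matrix.cons_val_zero, Equiv.refl_apply, hσ]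
      exact Fin.pos_of_ne_zero hne
    · intro σ _ _; exact hnn σ
  refine ⟨⟨?_, ?_, ?_⟩, ?_, ?_⟩
  · intro i o; fin_cases i <;> fin_cases o <;> norm_num [P]
  · intro i; fin_cases i <;> norm_num [P, Fin.sum_univ_three, Matrix.cons_val_two, Matrix.vecHead, Matrix.vecTail]
  · intro o
    fin_cases o <;>
      norm_num [P, Fin.sum_univ_three, Matrix.cons_val_two, Matrix.vecHead, Matrix.vecTail]
  · intro i i'
    fin_cases i <;> fin_cases i'
    · exact Or.inl fun o => rfl
    · refine Or.inr fun h => ?_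
      have := h 1
      rw [Finset.sum_filter, Finset.sum_filter, Fin.sum_univ_three, Fin.sum_univ_three] at this
      simp (config := { decide := true })
        [rank, P, Finset.sum_filter, Fin.sum_univ_three, Equiv.swap_apply_def,
          Matrix.cons_val_two, Matrix.vecHead, Matrix.vecTail] at this
      norm_num at this
    · refine Or.inr fun h => ?_
      have := h 1
      rw [Finset.sum_filter, Finset.sum_filter, Fin.sum_univ_three, Fin.sum_univ_three] at this
      simp (config := { decide := true })
        [rank, P, Finset.sum_filter, Fin.sum_univ_three, Equiv.swap_apply_def,
          Matrix.cons_val_two, Matrix.vecHead, Matrix.vecTail] at this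
      norm_num at this
    · refine Or.inr fun h => ?_
      have := h 0
      simp (config := { decide := true })
        [rank, P, Finset.sum_filter, Fin.sum_univ_three, Equiv.swap_apply_def] at this
      norm_num at this
    · exact Or.inl fun o => rfl
    · refine Or.inr fun h => ?_
      have := h 0
      simp (config := { decide := true })
        [rank, P, Finset.sum_filter, Fin.sum_univ_three, Equiv.swap_apply_def] at this
      norm_num at this
    · refine Or.inr fun h => ?_
      have := h 2
      simp (config := { decide := true })
        [rank, P, Finset.sum_filter, Fin.sum_univ_three, Equiv.swap_apply_def] at this
      norm_num at this
    · refine Or.inr fun h => ?_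
      have := h 2
      simp (config := { decide := true })
        [rank, P, Finset.sum_filter, Fin.sum_univ_three, Equiv.swap_apply_def] at this
      norm_num at this
    · exact Or.inl fun o => rfl
  · rintro ⟨w, ⟨hnn, hsum, hmarg⟩, hEF⟩
    have h10 := hmarg 1 0
    norm_num [P] at h10
    have h1 := hsub w hnn
    have h2 := hEF 0 1 (by decide)
    linarith
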